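/- For any partition λ of length ≤ N with Frobenius coordinates (α_1, …, α_d | β_1, …, β_d), one has Σ_{i=1}^{d} ((α_i + 1/2)² − (β_i + 1/2)²) = Σ_{i=1}^{N} ((λ_i − i + 1/2)² − (−i + 1/2)²). -/

import Mathlib

/-- The conjugate partition: `λ'_j = #{i ∈ {1,…,N} : λ_i ≥ j}` (0-based `j`). -/
def conjPart (N : ℕ) (lam : ℕ → ℕ) (j : ℕ) : ℕ :=
  ((Finset.range N).filter (fun i => j + 1 ≤ lam i)).card

/-- The Frobenius depth `d = #{i : λ_i ≥ i}` (1-based), i.e. the number of diagonal boxes. -/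
def frobDepth (N : ℕ) (lam : ℕ → ℕ) : ℕ :=
  ((Finset.range N).filter (fun i => i + 1 ≤ lam i)).card

/-- A down-closed finset of naturals is an initial segment. -/
lemma downclosed_eq_range (s : Finset ℕ) (h : ∀ j i, j ≤ i → i ∈ s → j ∈ s) :
    s = Finset.range s.card := by
  ext k
  simp only [Finset.mem_range]
  constructor
  · intro hk
    have hsub : Finset.range (k + 1) ⊆ s := fun j hj =>
      h j k (Nat.lt_succ_iff.mp (Finset.mem_range.mp hj)) hk
    have := Finset.card_le_card hsub
    simpa using this
  · intro hk
    by_contra hns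
    have hsub : s ⊆ Finset.range k := by
      intro i hi
      rw [Finset.mem_range]
      by_contra hik
      exact hns (h k i (Nat.le_of_not_lt hik) hi)
    have := Finset.card_le_card hsub
    simp only [Finset.card_range] at this
    omega

lemma sum_two_mul_range (n : ℕ) : ∑ k ∈ Finset.range n, (2 * (k : ℤ)) = n * (n - 1) := by
  induction n with
  | zero => simp
  | succ m ih =>
    rw [Finset.sum_range_succ, ih]
    push_cast
    ring

theorem frobenius_squares_identity (N : ℕ) (lam : ℕ → ℕ)
    (hanti : Antitone lam) (hsupp : ∀ i, N ≤ i → lam i = 0) :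
    ∑ i ∈ Finset.range (frobDepth N lam),
        ((((lam i - (i + 1) : ℕ) : ℝ) + 1 / 2) ^ 2
          - (((conjPart N lam i - (i + 1) : ℕ) : ℝ) + 1 / 2) ^ 2)
      = ∑ i ∈ Finset.range N,
          (((lam i : ℝ) - ((i : ℝ) + 1) + 1 / 2) ^ 2 - (-((i : ℝ) + 1) + 1 / 2) ^ 2) := by
  classical
  set d := frobDepth N lam with hd
  -- membership characterizations
  have hdmem : ∀ i, i < d ↔ i < N ∧ i + 1 ≤ lam i := by
    intro i
    have hset : (Finset.range N).filter (fun i => i + 1 ≤ lam i) = Finset.range d := by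
      rw [hd, frobDepth]
      apply downclosed_eq_range
      intro j i hji hi
      simp only [Finset.mem_filter, Finset.mem_range] at *
      have := hanti hji
      omega
    constructor
    · intro hi
      have : i ∈ (Finset.range N).filter (fun i => i + 1 ≤ lam i) := by
        rw [hset]; exact Finset.mem_range.mpr hi
      simpa using this
    · intro hi
      have : i ∈ (Finset.range N).filter (fun i => i + 1 ≤ lam i) := by
        simp only [Finset.mem_filter, Finset.mem_range]; exact hi
      rw [hset] at this
      exact Finset.mem_range.mp this
  have hcmem : ∀ m i, i < conjPart N lam m ↔ i < N ∧ m + 1 ≤ lam i := by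
    intro m i
    have hset : (Finset.range N).filter (fun i => m + 1 ≤ lam i)
        = Finset.range (conjPart N lam m) := by
      rw [conjPart]
      apply downclosed_eq_range
      intro j i hji hi
      simp only [Finset.mem_filter, Finset.mem_range] at *
      have := hanti hji
      omega
    constructor
    · intro hi
      have : i ∈ (Finset.range N).filter (fun i => m + 1 ≤ lam i) := by
        rw [hset]; exact Finset.mem_range.mpr hi
      simpa using this
    · intro hi
      have : i ∈ (Finset.range N).filter (fun i => m + 1 ≤ lam i) := by
        simp only [Finset.mem_filter, Finset.mem_range]; exact hi
      rw [hset] at this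
      exact Finset.mem_range.mp this
  -- the content function
  set F : ℕ → ℕ → ℤ := fun i j => 2 * ((j : ℤ) - (i : ℤ)) with hF
  -- total content over the diagram, summed via the sigma finset
  set s : Finset ((_ : ℕ) × ℕ) :=
    (Finset.range N).sigma (fun i => Finset.range (lam i)) with hs
  -- the min of coordinates lands in `range d`
  have hmaps : ∀ x ∈ s, min x.1 x.2 ∈ Finset.range d := by
    rintro ⟨i, j⟩ hx
    simp only [hs, Finset.mem_sigma, Finset.mem_range] at hx
    rcases hx with ⟨hiN, hj⟩
    rcases le_or_gt i j with hij | hij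
    · simp only [Finset.mem_range, min_eq_left hij]
      exact (hdmem i).mpr ⟨hiN, by omega⟩
    · simp only [Finset.mem_range, min_eq_right hij.le]
      have := hanti (le_of_lt hij)
      exact (hdmem j).mpr ⟨by omega, by omega⟩
  -- fiberwise decomposition
  have hfiber := Finset.sum_fiberwise_of_maps_to hmaps (fun x => F x.1 x.2)
  -- compute the fiber over m < d : it is the hook of the m-th diagonal box
  have hhook : ∀ m ∈ Finset.range d,
      ∑ x ∈ s.filter (fun x => min x.1 x.2 = m), F x.1 x.2
        = ((lam m - (m + 1) : ℕ) : ℤ) * ((lam m - (m + 1) : ℕ) + 1)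
          - ((conjPart N lam m - (m + 1) : ℕ) : ℤ) * ((conjPart N lam m - (m + 1) : ℕ) + 1) := by
    intro m hm
    rw [Finset.mem_range] at hm
    obtain ⟨hmN, hml⟩ := (hdmem m).mp hm
    have hmc : m + 1 ≤ conjPart N lam m := by
      rw [← Nat.lt_iff_add_one_le, hcmem]
      exact ⟨hmN, hml⟩
    set a : ℕ := lam m - (m + 1) with ha
    set b : ℕ := conjPart N lam m - (m + 1) with hb
    -- rewrite the fiber as a sigma of filters
    have hfs : s.filter (fun x => min x.1 x.2 = m)
        = (Finset.range N).sigma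
            (fun i => (Finset.range (lam i)).filter (fun j => min i j = m)) := by
      ext ⟨i, j⟩
      simp only [hs, Finset.mem_filter, Finset.mem_sigma, Finset.mem_range]
      tauto
    rw [hfs, Finset.sum_sigma]
    -- now compute the double sum
    have hinner : ∀ i ∈ Finset.range N,
        ∑ j ∈ (Finset.range (lam i)).filter (fun j => min i j = m), F i j
          = (if i = m then ∑ j ∈ Finset.Ico m (lam m), F m j else 0)
            + (if m + 1 ≤ i ∧ m + 1 ≤ lam i then F i m else 0) := by
      intro i _
      rcases Nat.lt_trichotomy i m with hlt | heq | hgt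
      · have hset : (Finset.range (lam i)).filter (fun j => min i j = m) = ∅ := by
          apply Finset.filter_false_of_mem
          intro j _
          omega
        rw [hset, if_neg (by omega : ¬ i = m),
          if_neg (by omega : ¬(m + 1 ≤ i ∧ m + 1 ≤ lam i))]
        simp
      · have hset : (Finset.range (lam m)).filter (fun j => min m j = m)
            = Finset.Ico m (lam m) := by
          ext j
          simp only [Finset.mem_filter, Finset.mem_range, Finset.mem_Ico]
          omega
        rw [heq, hset, if_pos rfl, if_neg (by omega : ¬(m + 1 ≤ m ∧ m + 1 ≤ lam m))]
        ring
      · rw [if_neg (by omega : ¬ i = m), zero_add]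
        by_cases h : m + 1 ≤ lam i
        · have hset : (Finset.range (lam i)).filter (fun j => min i j = m) = {m} := by
            ext j
            simp only [Finset.mem_filter, Finset.mem_range, Finset.mem_singleton]
            omega
          rw [hset, if_pos ⟨hgt, h⟩, Finset.sum_singleton]
        · have hset : (Finset.range (lam i)).filter (fun j => min i j = m) = ∅ := by
            apply Finset.filter_false_of_mem
            intro j hj
            rw [Finset.mem_range] at hj
            omega
          rw [hset, if_neg (by tauto)]
          simp
    rw [Finset.sum_congr rfl hinner, Finset.sum_add_distrib]
    have h1 : ∑ i ∈ Finset.range N,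
        (if i = m then ∑ j ∈ Finset.Ico m (lam m), F m j else 0)
          = ∑ j ∈ Finset.Ico m (lam m), F m j := by
      rw [Finset.sum_ite_eq' (Finset.range N) m]
      simp [hmN]
    have h2 : ∑ i ∈ Finset.range N, (if m + 1 ≤ i ∧ m + 1 ≤ lam i then F i m else 0)
        = ∑ i ∈ Finset.Ico (m + 1) (conjPart N lam m), F i m := by
      rw [← Finset.sum_filter]
      apply Finset.sum_congr _ (fun _ _ => rfl)
      ext i
      simp only [Finset.mem_filter, Finset.mem_range, Finset.mem_Ico]
      rw [hcmem]
      tauto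
    rw [h1, h2]
    -- arm sum
    have harm : ∑ j ∈ Finset.Ico m (lam m), F m j = (a : ℤ) * ((a : ℤ) + 1) := by
      rw [Finset.sum_Ico_eq_sum_range]
      have hlen : lam m - m = a + 1 := by omega
      rw [hlen]
      have : ∀ k ∈ Finset.range (a + 1), F m (m + k) = 2 * (k : ℤ) := by
        intro k _
        simp only [hF]
        push_cast
        ring
      rw [Finset.sum_congr rfl this, sum_two_mul_range]
      push_cast
      ring
    -- leg sum
    have hleg : ∑ i ∈ Finset.Ico (m + 1) (conjPart N lam m), F i m
        = -((b : ℤ) * ((b : ℤ) + 1)) := by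
      rw [Finset.sum_Ico_eq_sum_range]
      have hlen : conjPart N lam m - (m + 1) = b := rfl
      rw [hlen]
      have : ∀ k ∈ Finset.range b, F (m + 1 + k) m = -(2 * (k : ℤ)) - 2 := by
        intro k _
        simp only [hF]
        push_cast
        ring
      rw [Finset.sum_congr rfl this]
      rw [Finset.sum_sub_distrib, Finset.sum_neg_distrib]
      rw [sum_two_mul_range]
      simp [Finset.sum_const, Finset.card_range]
      push_cast
      ring
    rw [harm, hleg]
    ring
  -- compute the row sums
  have hrow : ∀ i ∈ Finset.range N,
      ∑ j ∈ Finset.range (lam i), F i j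
        = (lam i : ℤ) * ((lam i : ℤ) - 1) - 2 * (i : ℤ) * (lam i : ℤ) := by
    intro i _
    have : ∀ j ∈ Finset.range (lam i), F i j = 2 * (j : ℤ) - 2 * (i : ℤ) := by
      intro j _
      simp only [hF]; ring
    rw [Finset.sum_congr rfl this, Finset.sum_sub_distrib, sum_two_mul_range]
    simp [Finset.sum_const, Finset.card_range]
    ring
  -- the key integer identity
  have key : ∑ m ∈ Finset.range d,
      (((lam m - (m + 1) : ℕ) : ℤ) * ((lam m - (m + 1) : ℕ) + 1)
        - ((conjPart N lam m - (m + 1) : ℕ) : ℤ) * ((conjPart N lam m - (m + 1) : ℕ) + 1))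
      = ∑ i ∈ Finset.range N,
          ((lam i : ℤ) * ((lam i : ℤ) - 1) - 2 * (i : ℤ) * (lam i : ℤ)) := by
    rw [← Finset.sum_congr rfl hhook, hfiber, hs, Finset.sum_sigma]
    exact Finset.sum_congr rfl hrow
  -- pass to the reals
  have hL : ∑ i ∈ Finset.range d,
      ((((lam i - (i + 1) : ℕ) : ℝ) + 1 / 2) ^ 2
        - (((conjPart N lam i - (i + 1) : ℕ) : ℝ) + 1 / 2) ^ 2)
      = ((∑ m ∈ Finset.range d,
          (((lam m - (m + 1) : ℕ) : ℤ) * ((lam m - (m + 1) : ℕ) + 1)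
            - ((conjPart N lam m - (m + 1) : ℕ) : ℤ)
              * ((conjPart N lam m - (m + 1) : ℕ) + 1)) : ℤ) : ℝ) := by
    push_cast
    apply Finset.sum_congr rfl
    intro i _
    ring
  have hR : ∑ i ∈ Finset.range N,
      (((lam i : ℝ) - ((i : ℝ) + 1) + 1 / 2) ^ 2 - (-((i : ℝ) + 1) + 1 / 2) ^ 2)
      = ((∑ i ∈ Finset.range N,
          ((lam i : ℤ) * ((lam i : ℤ) - 1) - 2 * (i : ℤ) * (lam i : ℤ)) : ℤ) : ℝ) := by
    push_cast
    apply Finset.sum_congr rfl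
    intro i _
    ring
  rw [hL, hR, key]
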